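/- For every probabilistic database p over D with endogenous/exogenous partition (D^en, D^ex), every query Q : Finset D → ℝ, and every endogenous tuple τ ∈ D^en: CE(p,Q,τ) = Σ_{W ⊆ D^en \ {τ}} Δ(Q,W,τ) · ( p(W ∪ D^ex) + p(W ∪ D^ex ∪ {τ}) ). -/

import Mathlib

open Finset

variable {α : Type*} [DecidableEq α]

/-- The positively intervened distribution `p^{+τ}`:
`p^{+τ}(W) = Σ_{W' ⊆ D, W' ∪ {τ} = W} p(W')`. -/
noncomputable def pPlus (D : Finset α) (p : Finset α → ℝ) (τ : α) (W : Finset α) : ℝ :=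
  ∑ W' ∈ D.powerset.filter (fun W' => W' ∪ {τ} = W), p W'

/-- The negatively intervened distribution `p^{−τ}`:
`p^{−τ}(W) = Σ_{W' ⊆ D, W' \ {τ} = W} p(W')`. -/
noncomputable def pMinus (D : Finset α) (p : Finset α → ℝ) (τ : α) (W : Finset α) : ℝ :=
  ∑ W' ∈ D.powerset.filter (fun W' => W' \ {τ} = W), p W'

/-- The generalized causal-effect score of tuple `τ` for query `Q` on the PDB `p` over `D`:
`CE(p,Q,τ) = Σ_{W ⊆ D} p^{+τ}(W)·Q[W] − Σ_{W ⊆ D} p^{−τ}(W)·Q[W]`. -/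
noncomputable def CE (D : Finset α) (p : Finset α → ℝ) (Q : Finset α → ℝ) (τ : α) : ℝ :=
  ∑ W ∈ D.powerset, pPlus D p τ W * Q W - ∑ W ∈ D.powerset, pMinus D p τ W * Q W

/-- `Δ(Q,W,τ) = Q[W ∪ D^ex ∪ {τ}] − Q[W ∪ D^ex]`. -/
noncomputable def Delta (Dex : Finset α) (Q : Finset α → ℝ) (W : Finset α) (τ : α) : ℝ :=
  Q (W ∪ Dex ∪ {τ}) - Q (W ∪ Dex)

/-- For any PDB `p` over `D = D^en ∪ D^ex` (vanishing on worlds not containing `D^ex`),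
any query `Q`, and any endogenous tuple `τ`:
`CE(p,Q,τ) = Σ_{W ⊆ D^en \ {τ}} Δ(Q,W,τ)·(p(W ∪ D^ex) + p(W ∪ D^ex ∪ {τ}))`. -/
theorem stmt1 (D Den Dex : Finset α)
    (hunion : Den ∪ Dex = D) (hdisj : Disjoint Den Dex)
    (p : Finset α → ℝ)
    (hp0 : ∀ W ∈ D.powerset, 0 ≤ p W)
    (hp1 : ∑ W ∈ D.powerset, p W = 1)
    (hexo : ∀ W ∈ D.powerset, ¬ Dex ⊆ W → p W = 0)
    (Q : Finset α → ℝ) (τ : α) (hτ : τ ∈ Den) :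
    CE D p Q τ =
      ∑ W ∈ (Den.erase τ).powerset,
        Delta Dex Q W τ * (p (W ∪ Dex) + p (W ∪ Dex ∪ {τ})) := by
  have hτD : τ ∈ D := hunion ▸ mem_union_left _ hτ
  have hτex : τ ∉ Dex := disjoint_left.mp hdisj hτ
  -- Step 1: rewrite CE as a single sum over worlds
  have hplus : ∑ W ∈ D.powerset, pPlus D p τ W * Q W
      = ∑ W' ∈ D.powerset, p W' * Q (W' ∪ {τ}) := by
    rw [← Finset.sum_fiberwise_of_maps_to (g := fun W' => W' ∪ {τ})
      (fun x hx => mem_powerset.mpr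
        (union_subset (mem_powerset.mp hx) (singleton_subset_iff.mpr hτD))) (fun W' => p W' * Q (W' ∪ {τ}))]
    refine Finset.sum_congr rfl fun W hW => ?_
    rw [pPlus, Finset.sum_mul]
    refine Finset.sum_congr rfl fun W' hW' => ?_
    rw [(mem_filter.mp hW').2]
  have hminus : ∑ W ∈ D.powerset, pMinus D p τ W * Q W
      = ∑ W' ∈ D.powerset, p W' * Q (W' \ {τ}) := by
    rw [← Finset.sum_fiberwise_of_maps_to (g := fun W' => W' \ {τ})
      (fun x hx => mem_powerset.mpr (sdiff_subset.trans (mem_powerset.mp hx))) (fun W' => p W' * Q (W' \ {τ}))]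
    refine Finset.sum_congr rfl fun W hW => ?_
    rw [pMinus, Finset.sum_mul]
    refine Finset.sum_congr rfl fun W' hW' => ?_
    rw [(mem_filter.mp hW').2]
  rw [CE, hplus, hminus, ← Finset.sum_sub_distrib]
  have hcomb : ∀ W', p W' * Q (W' ∪ {τ}) - p W' * Q (W' \ {τ})
      = p W' * (Q (W' ∪ {τ}) - Q (W' \ {τ})) := fun W' => (mul_sub _ _ _).symm
  simp_rw [hcomb]
  -- Step 2: drop worlds not containing Dex
  rw [← Finset.sum_filter_add_sum_filter_not D.powerset (fun W' => Dex ⊆ W')]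
  have hzero : ∑ W' ∈ D.powerset.filter (fun W' => ¬ Dex ⊆ W'),
      p W' * (Q (W' ∪ {τ}) - Q (W' \ {τ})) = 0 := by
    refine Finset.sum_eq_zero fun W' hW' => ?_
    rw [hexo W' (mem_filter.mp hW').1 (mem_filter.mp hW').2, zero_mul]
  rw [hzero, add_zero]
  -- Step 3: reindex by V ⊆ Den via V ↦ V ∪ Dex
  have hre : ∑ W' ∈ D.powerset.filter (fun W' => Dex ⊆ W'),
      p W' * (Q (W' ∪ {τ}) - Q (W' \ {τ}))
      = ∑ V ∈ Den.powerset, p (V ∪ Dex) * (Q (V ∪ Dex ∪ {τ}) - Q ((V ∪ Dex) \ {τ})) := by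
    refine (Finset.sum_nbij' (fun W' => W' \ Dex) (fun V => V ∪ Dex) ?_ ?_ ?_ ?_ ?_).symm.symm
    · intro W' hW'
      simp only [mem_filter, mem_powerset] at hW' ⊢
      intro x hx
      have := hW'.1 (mem_sdiff.mp hx).1
      rw [← hunion] at this
      exact (mem_union.mp this).resolve_right (mem_sdiff.mp hx).2
    · intro V hV
      simp only [mem_powerset] at hV
      simp only [mem_filter, mem_powerset]
      exact ⟨union_subset (hunion ▸ (hV.trans subset_union_left))
        (hunion ▸ subset_union_right), subset_union_right⟩
    · intro W' hW'
      simp only [mem_filter] at hW'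
      exact sdiff_union_of_subset hW'.2
    · intro V hV
      simp only [mem_powerset] at hV
      exact union_sdiff_cancel_right (hdisj.mono_left hV)
    · intro W' hW'
      simp only [mem_filter] at hW'
      rw [sdiff_union_of_subset hW'.2]
  rw [hre]
  -- Step 4: split Den = insert τ (Den.erase τ)
  conv_lhs => rw [← insert_erase hτ, Finset.sum_powerset_insert (notMem_erase τ Den)]
  rw [← Finset.sum_add_distrib]
  refine Finset.sum_congr rfl fun W hW => ?_
  simp only [mem_powerset] at hW
  have hτW : τ ∉ W ∪ Dex := by
    simp only [mem_union]
    rintro (h | h)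
    · exact (notMem_erase τ Den) (hW h)
    · exact hτex h
  have h1 : (W ∪ Dex) \ {τ} = W ∪ Dex := sdiff_eq_self_of_disjoint (by simpa using hτW)
  have h2 : insert τ W ∪ Dex = W ∪ Dex ∪ {τ} := by
    rw [insert_eq, union_comm {τ} W, union_assoc, union_assoc, union_comm {τ} Dex]
  have h3 : W ∪ Dex ∪ {τ} ∪ {τ} = W ∪ Dex ∪ {τ} := by rw [union_assoc, union_self]
  have h4 : (W ∪ Dex ∪ {τ}) \ {τ} = W ∪ Dex := by
    rw [union_sdiff_cancel_right (by simpa using hτW)]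
  rw [h1, h2, h3, h4, Delta]
  ring
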